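/- Let G be the graph consisting of an even cycle C = v_1 ... v_k (k ≥ 4 even) together with, for each vertex v_i with 2 ≤ i ≤ k, one triangle complete to v_i, and for v_1, two disjoint triangles each complete to v_1, all triangles pairwise anticomplete and anticomplete to C except via their designated cycle vertex. Then G is not a contact B0-VPG graph. -/

import Mathlib

/-- An axis-parallel nontrivial segment on the grid: `horiz` tells its direction,
`coord` is the fixed coordinate (the `y`-coordinate if horizontal, the `x`-coordinate
if vertical) and `[lo, hi]` (with `lo < hi`, i.e. the segment is nontrivial) is the
interval spanned by the varying coordinate. -/
structure GridSeg where
  horiz : Bool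
  coord : ℤ
  lo : ℤ
  hi : ℤ
  lt : lo < hi

namespace GridSeg

/-- The set of points (in the real plane) of a grid segment. -/
def pts (s : GridSeg) : Set (ℝ × ℝ) :=
  if s.horiz then {p | p.2 = (s.coord : ℝ) ∧ (s.lo : ℝ) ≤ p.1 ∧ p.1 ≤ (s.hi : ℝ)}
  else {p | p.1 = (s.coord : ℝ) ∧ (s.lo : ℝ) ≤ p.2 ∧ p.2 ≤ (s.hi : ℝ)}

/-- The interior of a grid segment. -/
def interior (s : GridSeg) : Set (ℝ × ℝ) :=
  if s.horiz then {p | p.2 = (s.coord : ℝ) ∧ (s.lo : ℝ) < p.1 ∧ p.1 < (s.hi : ℝ)}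
  else {p | p.1 = (s.coord : ℝ) ∧ (s.lo : ℝ) < p.2 ∧ p.2 < (s.hi : ℝ)}

/-- The two endpoints of a grid segment. -/
def ends (s : GridSeg) : Set (ℝ × ℝ) :=
  if s.horiz then {((s.lo : ℝ), (s.coord : ℝ)), ((s.hi : ℝ), (s.coord : ℝ))}
  else {((s.coord : ℝ), (s.lo : ℝ)), ((s.coord : ℝ), (s.hi : ℝ))}

/-- Two segments touch if they share a point which is an endpoint of at least
one of the two segments. -/
def Touch (s t : GridSeg) : Prop :=
  ∃ p : ℝ × ℝ, p ∈ s.pts ∧ p ∈ t.pts ∧ (p ∈ s.ends ∨ p ∈ t.ends)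

end GridSeg

/-- `f` is a contact B₀-VPG representation of `G`: the segments of distinct vertices are
interiorly disjoint, and two distinct vertices are adjacent iff their segments touch. -/
def IsB0Rep {V : Type*} (G : SimpleGraph V) (f : V → GridSeg) : Prop :=
  (∀ v w : V, v ≠ w → Disjoint (GridSeg.interior (f v)) (GridSeg.interior (f w))) ∧
  (∀ v w : V, v ≠ w → (G.Adj v w ↔ GridSeg.Touch (f v) (f w)))

/-- A graph is contact B₀-VPG if it admits a contact B₀-VPG representation. -/
def ContactB0VPG {V : Type*} (G : SimpleGraph V) : Prop :=
  ∃ f : V → GridSeg, IsB0Rep G f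

/-- Cyclic shift: the element `i + m (mod k)` of `Fin k`. -/
def cycShift {k : ℕ} (i : Fin k) (m : ℕ) : Fin k :=
  i + ⟨m % k, Nat.mod_lt m (Nat.lt_of_le_of_lt (Nat.zero_le i.1) i.isLt)⟩

/-- `c` lists the vertices of an induced cycle (a hole, when `k ≥ 4`) of `G`, in cyclic
order: `c` is injective and two of its vertices are adjacent iff they are consecutive. -/
def IsInducedCycle {V : Type*} (G : SimpleGraph V) {k : ℕ} (c : Fin k → V) : Prop :=
  Function.Injective c ∧
    ∀ i j : Fin k, G.Adj (c i) (c j) ↔ (i ≠ j ∧ (i = cycShift j 1 ∨ j = cycShift i 1))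

/-- The graph made of a `k`-cycle `v_1 … v_k` together with, for each `i`, `t i` pairwise
anticomplete triangles complete to `v_i` (and anticomplete to the rest of the graph).
Vertices: `Sum.inl i` is the cycle vertex `v_i`; `Sum.inr ⟨i, a, x⟩` is the `x`-th vertex
of the `a`-th triangle attached to `v_i`. -/
def cycleWithTriangles (k : ℕ) (t : Fin k → ℕ) :
    SimpleGraph (Fin k ⊕ Σ i : Fin k, Fin (t i) × Fin 3) where
  Adj a b :=
    match a, b with
    | Sum.inl i, Sum.inl j => i ≠ j ∧ (i = cycShift j 1 ∨ j = cycShift i 1)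
    | Sum.inl i, Sum.inr x => i = x.1
    | Sum.inr x, Sum.inl i => i = x.1
    | Sum.inr x, Sum.inr y => x.1 = y.1 ∧ x.2.1.1 = y.2.1.1 ∧ x.2.2 ≠ y.2.2
  symm := by
    constructor
    rintro (i | x) (j | y) h
    · exact ⟨h.1.symm, h.2.symm⟩
    · exact h
    · exact h
    · exact ⟨h.1.symm, h.2.1.symm, h.2.2.symm⟩
  loopless := by
    constructor
    rintro (i | x) h
    · exact h.1 rfl
    · exact h.2.2 rfl


namespace GridSeg

theorem mem_pts_h {s : GridSeg} (hs : s.horiz = true) (p : ℝ × ℝ) :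
    p ∈ s.pts ↔ p.2 = (s.coord : ℝ) ∧ (s.lo : ℝ) ≤ p.1 ∧ p.1 ≤ (s.hi : ℝ) := by
  simp [pts, hs]

theorem mem_pts_v {s : GridSeg} (hs : s.horiz = false) (p : ℝ × ℝ) :
    p ∈ s.pts ↔ p.1 = (s.coord : ℝ) ∧ (s.lo : ℝ) ≤ p.2 ∧ p.2 ≤ (s.hi : ℝ) := by
  simp [pts, hs]

theorem mem_interior_h {s : GridSeg} (hs : s.horiz = true) (p : ℝ × ℝ) :
    p ∈ s.interior ↔ p.2 = (s.coord : ℝ) ∧ (s.lo : ℝ) < p.1 ∧ p.1 < (s.hi : ℝ) := by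
  simp [interior, hs]

theorem mem_interior_v {s : GridSeg} (hs : s.horiz = false) (p : ℝ × ℝ) :
    p ∈ s.interior ↔ p.1 = (s.coord : ℝ) ∧ (s.lo : ℝ) < p.2 ∧ p.2 < (s.hi : ℝ) := by
  simp [interior, hs]

theorem mem_ends_h {s : GridSeg} (hs : s.horiz = true) (p : ℝ × ℝ) :
    p ∈ s.ends ↔ p = ((s.lo : ℝ), (s.coord : ℝ)) ∨ p = ((s.hi : ℝ), (s.coord : ℝ)) := by
  simp [ends, hs, Set.mem_insert_iff, Set.mem_singleton_iff]

theorem mem_ends_v {s : GridSeg} (hs : s.horiz = false) (p : ℝ × ℝ) :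
    p ∈ s.ends ↔ p = ((s.coord : ℝ), (s.lo : ℝ)) ∨ p = ((s.coord : ℝ), (s.hi : ℝ)) := by
  simp [ends, hs, Set.mem_insert_iff, Set.mem_singleton_iff]

theorem touch_symm {s t : GridSeg} (h : s.Touch t) : t.Touch s := by
  obtain ⟨p, h1, h2, h3⟩ := h
  exact ⟨p, h2, h1, h3.symm⟩

theorem ends_subset_pts (s : GridSeg) : s.ends ⊆ s.pts := by
  intro p hp
  have hlt : (s.lo : ℝ) ≤ (s.hi : ℝ) := by exact_mod_cast s.lt.le
  cases h : s.horiz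
  · simp only [ends, pts, h, Bool.false_eq_true, if_false, Set.mem_insert_iff,
      Set.mem_singleton_iff, Set.mem_setOf_eq] at hp ⊢
    rcases hp with rfl | rfl
    · exact ⟨rfl, le_rfl, hlt⟩
    · exact ⟨rfl, hlt, le_rfl⟩
  · simp only [ends, pts, h, if_true, Set.mem_insert_iff,
      Set.mem_singleton_iff, Set.mem_setOf_eq] at hp ⊢
    rcases hp with rfl | rfl
    · exact ⟨rfl, le_rfl, hlt⟩
    · exact ⟨rfl, hlt, le_rfl⟩

theorem pts_cases {s : GridSeg} {p : ℝ × ℝ} (hp : p ∈ s.pts) :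
    p ∈ s.interior ∨ p ∈ s.ends := by
  cases h : s.horiz
  · simp only [pts, interior, ends, h, Bool.false_eq_true, if_false, Set.mem_insert_iff,
      Set.mem_singleton_iff, Set.mem_setOf_eq] at hp ⊢
    obtain ⟨h1, h2, h3⟩ := hp
    rcases eq_or_lt_of_le h2 with h2' | h2'
    · exact Or.inr (Or.inl (Prod.ext h1 h2'.symm))
    · rcases eq_or_lt_of_le h3 with h3' | h3'
      · exact Or.inr (Or.inr (Prod.ext h1 h3'))
      · exact Or.inl ⟨h1, h2', h3'⟩
  · simp only [pts, interior, ends, h, if_true, Set.mem_insert_iff,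
      Set.mem_singleton_iff, Set.mem_setOf_eq] at hp ⊢
    obtain ⟨h1, h2, h3⟩ := hp
    rcases eq_or_lt_of_le h2 with h2' | h2'
    · exact Or.inr (Or.inl (Prod.ext h2'.symm h1))
    · rcases eq_or_lt_of_le h3 with h3' | h3'
      · exact Or.inr (Or.inr (Prod.ext h3' h1))
      · exact Or.inl ⟨h1, h2', h3'⟩

theorem ends_pair (s : GridSeg) : ∃ x y : ℝ × ℝ, s.ends = {x, y} := by
  cases h : s.horiz
  · refine ⟨((s.coord : ℝ), (s.lo : ℝ)), ((s.coord : ℝ), (s.hi : ℝ)), ?_⟩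
    simp [ends, h]
  · refine ⟨((s.lo : ℝ), (s.coord : ℝ)), ((s.hi : ℝ), (s.coord : ℝ)), ?_⟩
    simp [ends, h]

theorem parallel_touch_h {s t : GridSeg} (hs : s.horiz = true) (ht : t.horiz = true)
    (hd : Disjoint s.interior t.interior) (htc : s.Touch t) :
    s.coord = t.coord ∧ (s.hi = t.lo ∨ t.hi = s.lo) := by
  obtain ⟨p, hps, hpt, -⟩ := htc
  simp only [pts, hs, ht, if_true, Set.mem_setOf_eq] at hps hpt
  obtain ⟨hy, h1, h2⟩ := hps
  obtain ⟨hy', h3, h4⟩ := hpt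
  have hcoord : s.coord = t.coord := by
    have : (s.coord : ℝ) = (t.coord : ℝ) := by rw [← hy, hy']
    exact_mod_cast this
  refine ⟨hcoord, ?_⟩
  have i1 : s.lo ≤ t.hi := by exact_mod_cast h1.trans h4
  have i2 : t.lo ≤ s.hi := by exact_mod_cast h3.trans h2
  by_contra hcon
  push_neg at hcon
  have hlt1 := s.lt
  have hlt2 := t.lt
  obtain ⟨L, R, hL1, hL2, hR1, hR2, hLR⟩ :
      ∃ L R : ℤ, s.lo ≤ L ∧ t.lo ≤ L ∧ R ≤ s.hi ∧ R ≤ t.hi ∧ L < R :=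
    ⟨max s.lo t.lo, min s.hi t.hi, by omega, by omega, by omega, by omega, by omega⟩
  set x : ℝ := ((L + R : ℤ) : ℝ) / 2 with hxdef
  have hcast : (L : ℝ) < (R : ℝ) := by exact_mod_cast hLR
  have hx1 : (L : ℝ) < x := by rw [hxdef]; push_cast; linarith
  have hx2 : x < (R : ℝ) := by rw [hxdef]; push_cast; linarith
  have hmem1 : (x, (s.coord : ℝ)) ∈ s.interior := by
    rw [mem_interior_h hs]
    exact ⟨rfl, lt_of_le_of_lt (by exact_mod_cast hL1) hx1,
      lt_of_lt_of_le hx2 (by exact_mod_cast hR1)⟩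
  have hmem2 : (x, (s.coord : ℝ)) ∈ t.interior := by
    rw [mem_interior_h ht]
    exact ⟨show (s.coord : ℝ) = (t.coord : ℝ) by exact_mod_cast hcoord,
      lt_of_le_of_lt (by exact_mod_cast hL2) hx1,
      lt_of_lt_of_le hx2 (by exact_mod_cast hR2)⟩
  exact Set.disjoint_left.mp hd hmem1 hmem2

theorem parallel_touch_v {s t : GridSeg} (hs : s.horiz = false) (ht : t.horiz = false)
    (hd : Disjoint s.interior t.interior) (htc : s.Touch t) :
    s.coord = t.coord ∧ (s.hi = t.lo ∨ t.hi = s.lo) := by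
  obtain ⟨p, hps, hpt, -⟩ := htc
  simp only [pts, hs, ht, Bool.false_eq_true, if_false, Set.mem_setOf_eq] at hps hpt
  obtain ⟨hy, h1, h2⟩ := hps
  obtain ⟨hy', h3, h4⟩ := hpt
  have hcoord : s.coord = t.coord := by
    have : (s.coord : ℝ) = (t.coord : ℝ) := by rw [← hy, hy']
    exact_mod_cast this
  refine ⟨hcoord, ?_⟩
  have i1 : s.lo ≤ t.hi := by exact_mod_cast h1.trans h4
  have i2 : t.lo ≤ s.hi := by exact_mod_cast h3.trans h2
  by_contra hcon
  push_neg at hcon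
  have hlt1 := s.lt
  have hlt2 := t.lt
  obtain ⟨L, R, hL1, hL2, hR1, hR2, hLR⟩ :
      ∃ L R : ℤ, s.lo ≤ L ∧ t.lo ≤ L ∧ R ≤ s.hi ∧ R ≤ t.hi ∧ L < R :=
    ⟨max s.lo t.lo, min s.hi t.hi, by omega, by omega, by omega, by omega, by omega⟩
  set x : ℝ := ((L + R : ℤ) : ℝ) / 2 with hxdef
  have hcast : (L : ℝ) < (R : ℝ) := by exact_mod_cast hLR
  have hx1 : (L : ℝ) < x := by rw [hxdef]; push_cast; linarith
  have hx2 : x < (R : ℝ) := by rw [hxdef]; push_cast; linarith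
  have hmem1 : ((s.coord : ℝ), x) ∈ s.interior := by
    rw [mem_interior_v hs]
    exact ⟨rfl, lt_of_le_of_lt (by exact_mod_cast hL1) hx1,
      lt_of_lt_of_le hx2 (by exact_mod_cast hR1)⟩
  have hmem2 : ((s.coord : ℝ), x) ∈ t.interior := by
    rw [mem_interior_v ht]
    exact ⟨show (s.coord : ℝ) = (t.coord : ℝ) by exact_mod_cast hcoord,
      lt_of_le_of_lt (by exact_mod_cast hL2) hx1,
      lt_of_lt_of_le hx2 (by exact_mod_cast hR2)⟩
  exact Set.disjoint_left.mp hd hmem1 hmem2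

theorem perp_touch {s t : GridSeg} (hs : s.horiz = true) (ht : t.horiz = false)
    (htc : s.Touch t) :
    s.lo ≤ t.coord ∧ t.coord ≤ s.hi ∧ t.lo ≤ s.coord ∧ s.coord ≤ t.hi := by
  obtain ⟨p, hps, hpt, -⟩ := htc
  simp only [pts, hs, ht, if_true, Bool.false_eq_true, if_false, Set.mem_setOf_eq] at hps hpt
  obtain ⟨h1, h2, h3⟩ := hps
  obtain ⟨h4, h5, h6⟩ := hpt
  refine ⟨?_, ?_, ?_, ?_⟩
  · have : (s.lo : ℝ) ≤ (t.coord : ℝ) := by rw [← h4]; exact h2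
    exact_mod_cast this
  · have : (t.coord : ℝ) ≤ (s.hi : ℝ) := by rw [← h4]; exact h3
    exact_mod_cast this
  · have : (t.lo : ℝ) ≤ (s.coord : ℝ) := by rw [← h1]; exact h5
    exact_mod_cast this
  · have : (s.coord : ℝ) ≤ (t.hi : ℝ) := by rw [← h1]; exact h6
    exact_mod_cast this

theorem no3h {a b c : GridSeg} (ha : a.horiz = true) (hb : b.horiz = true) (hc : c.horiz = true)
    (dab : Disjoint a.interior b.interior) (dac : Disjoint a.interior c.interior)
    (dbc : Disjoint b.interior c.interior)
    (tab : a.Touch b) (tac : a.Touch c) (tbc : b.Touch c) : False := by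
  obtain ⟨-, h1⟩ := parallel_touch_h ha hb dab tab
  obtain ⟨-, h2⟩ := parallel_touch_h ha hc dac tac
  obtain ⟨-, h3⟩ := parallel_touch_h hb hc dbc tbc
  have := a.lt; have := b.lt; have := c.lt
  omega

theorem no3v {a b c : GridSeg} (ha : a.horiz = false) (hb : b.horiz = false) (hc : c.horiz = false)
    (dab : Disjoint a.interior b.interior) (dac : Disjoint a.interior c.interior)
    (dbc : Disjoint b.interior c.interior)
    (tab : a.Touch b) (tac : a.Touch c) (tbc : b.Touch c) : False := by
  obtain ⟨-, h1⟩ := parallel_touch_v ha hb dab tab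
  obtain ⟨-, h2⟩ := parallel_touch_v ha hc dac tac
  obtain ⟨-, h3⟩ := parallel_touch_v hb hc dbc tbc
  have := a.lt; have := b.lt; have := c.lt
  omega

theorem core1 {a b u w : GridSeg} (ha : a.horiz = true) (hb : b.horiz = true)
    (hu : u.horiz = false) (hw : w.horiz = false)
    (hab : a.hi = b.lo) (hcab : a.coord = b.coord)
    (duw : Disjoint u.interior w.interior)
    (tau : a.Touch u) (taw : a.Touch w) (tbu : b.Touch u) (tbw : b.Touch w)
    (tuw : u.Touch w) :
    ∃ p : ℝ × ℝ, p ∈ a.ends ∧ p ∈ b.ends ∧ p ∈ u.ends ∧ p ∈ w.ends := by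
  obtain ⟨q1, q2, q3, q4⟩ := perp_touch ha hu tau
  obtain ⟨r1, r2, r3, r4⟩ := perp_touch ha hw taw
  obtain ⟨q1', q2', q3', q4'⟩ := perp_touch hb hu tbu
  obtain ⟨r1', r2', r3', r4'⟩ := perp_touch hb hw tbw
  obtain ⟨-, hd⟩ := parallel_touch_v hu hw duw tuw
  have hult := u.lt
  have hwlt := w.lt
  have hu1 : u.coord = a.hi := by omega
  have hw1 : w.coord = a.hi := by omega
  have hu2 : a.coord = u.lo ∨ a.coord = u.hi := by omega
  have hw2 : a.coord = w.lo ∨ a.coord = w.hi := by omega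
  refine ⟨((a.hi : ℝ), (a.coord : ℝ)), ?_, ?_, ?_, ?_⟩
  · rw [mem_ends_h ha]
    exact Or.inr rfl
  · rw [mem_ends_h hb]
    left; rw [hab, hcab]
  · rw [mem_ends_v hu]
    rcases hu2 with h | h
    · left; rw [hu1, h]
    · right; rw [hu1, h]
  · rw [mem_ends_v hw]
    rcases hw2 with h | h
    · left; rw [hw1, h]
    · right; rw [hw1, h]

theorem core {a b u w : GridSeg} (ha : a.horiz = true) (hb : b.horiz = true)
    (hu : u.horiz = false) (hw : w.horiz = false)
    (dab : Disjoint a.interior b.interior) (duw : Disjoint u.interior w.interior)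
    (tab : a.Touch b) (tau : a.Touch u) (taw : a.Touch w) (tbu : b.Touch u)
    (tbw : b.Touch w) (tuw : u.Touch w) :
    ∃ p : ℝ × ℝ, p ∈ a.ends ∧ p ∈ b.ends ∧ p ∈ u.ends ∧ p ∈ w.ends := by
  obtain ⟨hc, hd⟩ := parallel_touch_h ha hb dab tab
  rcases hd with h | h
  · exact core1 ha hb hu hw h hc duw tau taw tbu tbw tuw
  · obtain ⟨p, h1, h2, h3, h4⟩ := core1 hb ha hu hw h hc.symm duw tbu tbw tau taw tuw
    exact ⟨p, h2, h1, h3, h4⟩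

theorem k4 (s0 s1 s2 s3 : GridSeg)
    (d01 : Disjoint s0.interior s1.interior) (d02 : Disjoint s0.interior s2.interior)
    (d03 : Disjoint s0.interior s3.interior) (d12 : Disjoint s1.interior s2.interior)
    (d13 : Disjoint s1.interior s3.interior) (d23 : Disjoint s2.interior s3.interior)
    (t01 : s0.Touch s1) (t02 : s0.Touch s2) (t03 : s0.Touch s3)
    (t12 : s1.Touch s2) (t13 : s1.Touch s3) (t23 : s2.Touch s3) :
    ∃ p : ℝ × ℝ, p ∈ s0.ends ∧ p ∈ s1.ends ∧ p ∈ s2.ends ∧ p ∈ s3.ends := by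
  cases h0 : s0.horiz <;> cases h1 : s1.horiz <;> cases h2 : s2.horiz <;> cases h3 : s3.horiz
  · exact (no3v h0 h1 h2 d01 d02 d12 t01 t02 t12).elim
  · exact (no3v h0 h1 h2 d01 d02 d12 t01 t02 t12).elim
  · exact (no3v h0 h1 h3 d01 d03 d13 t01 t03 t13).elim
  · obtain ⟨p, ha, hb, hu, hw⟩ := core h2 h3 h0 h1 d23 d01 t23 (touch_symm t02)
      (touch_symm t12) (touch_symm t03) (touch_symm t13) t01
    exact ⟨p, hu, hw, ha, hb⟩
  · exact (no3v h0 h2 h3 d02 d03 d23 t02 t03 t23).elim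
  · obtain ⟨p, ha, hb, hu, hw⟩ := core h1 h3 h0 h2 d13 d02 t13 (touch_symm t01)
      t12 (touch_symm t03) (touch_symm t23) t02
    exact ⟨p, hu, ha, hw, hb⟩
  · obtain ⟨p, ha, hb, hu, hw⟩ := core h1 h2 h0 h3 d12 d03 t12 (touch_symm t01)
      t13 (touch_symm t02) t23 t03
    exact ⟨p, hu, ha, hb, hw⟩
  · exact (no3h h1 h2 h3 d12 d13 d23 t12 t13 t23).elim
  · exact (no3v h1 h2 h3 d12 d13 d23 t12 t13 t23).elim
  · obtain ⟨p, ha, hb, hu, hw⟩ := core h0 h3 h1 h2 d03 d12 t03 t01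
      t02 (touch_symm t13) (touch_symm t23) t12
    exact ⟨p, ha, hu, hw, hb⟩
  · obtain ⟨p, ha, hb, hu, hw⟩ := core h0 h2 h1 h3 d02 d13 t02 t01
      t03 (touch_symm t12) t23 t13
    exact ⟨p, ha, hu, hb, hw⟩
  · exact (no3h h0 h2 h3 d02 d03 d23 t02 t03 t23).elim
  · obtain ⟨p, ha, hb, hu, hw⟩ := core h0 h1 h2 h3 d01 d23 t01 t02 t03 t12 t13 t23
    exact ⟨p, ha, hb, hu, hw⟩
  · exact (no3h h0 h1 h3 d01 d03 d13 t01 t03 t13).elim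
  · exact (no3h h0 h1 h2 d01 d02 d12 t01 t02 t12).elim
  · exact (no3h h0 h1 h2 d01 d02 d12 t01 t02 t12).elim


end GridSeg

theorem mem_pair_elim {α : Type*} {x y q p p' : α} (hq : q = x ∨ q = y)
    (hp : p = x ∨ p = y) (hp' : p' = x ∨ p' = y) (hne : p ≠ p') :
    q = p ∨ q = p' := by
  rcases hp with rfl | rfl <;> rcases hp' with rfl | rfl <;> tauto

theorem pair_elim2 {α : Type*} {x y a b c : α} (ha : a = x ∨ a = y) (hb : b = x ∨ b = y)
    (hc : c = x ∨ c = y) (h1 : a ≠ c) (h2 : b ≠ c) : a = b := by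
  rcases hc with rfl | rfl
  · rw [ha.resolve_left h1, hb.resolve_left h2]
  · rw [ha.resolve_right h1, hb.resolve_right h2]

theorem index_contra {k x y x1 y1 x2 y2 : ℕ} (hk : 4 ≤ k)
    (hx : x < k) (hy : y < k) (hxy : x ≠ y)
    (hx1 : x1 = x+1 ∧ x+1 < k ∨ x1 = 0 ∧ x+1 = k)
    (hy1 : y1 = y+1 ∧ y+1 < k ∨ y1 = 0 ∧ y+1 = k)
    (hx2 : x2 = x1+1 ∧ x1+1 < k ∨ x2 = 0 ∧ x1+1 = k)
    (hy2 : y2 = y1+1 ∧ y1+1 < k ∨ y2 = 0 ∧ y1+1 = k)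
    (e1 : x = y ∨ x = y1 ∨ y = x1)
    (e2 : x = y1 ∨ x = y2 ∨ y1 = x1)
    (e3 : x1 = y ∨ x1 = y1 ∨ y = x2)
    (e4 : x1 = y1 ∨ x1 = y2 ∨ y1 = x2) : False := by omega

/-- family `F₂`: an even cycle `v_1 … v_k` (`k ≥ 4`) where `v_1` carries two
disjoint triangles complete to it (Type 4) and every other cycle vertex carries one
triangle complete to it (Type 1), triangles pairwise anticomplete, is not contact B₀-VPG. -/
theorem F2_not_contactB0VPG (k : ℕ) (hk : 4 ≤ k) (hke : Even k) :
    ¬ ContactB0VPG (cycleWithTriangles k (fun i => if i.1 = 0 then 2 else 1)) := by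
  classical
  rintro ⟨f, hdisj, hadj⟩
  have hk0 : 0 < k := by omega
  set t : Fin k → ℕ := fun i => if i.1 = 0 then 2 else 1 with ht
  -- basic facts about cycShift
  have hcyc : ∀ i : Fin k, (cycShift i 1).val = (i.val + 1) % k := by
    intro i
    have h1 : (1 : ℕ) % k = 1 := Nat.mod_eq_of_lt (by omega)
    simp [cycShift, Fin.add_def, h1]
  have hsucc : ∀ i : Fin k,
      ((cycShift i 1).val = i.val + 1 ∧ i.val + 1 < k) ∨
      ((cycShift i 1).val = 0 ∧ i.val + 1 = k) := by
    intro i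
    have hlt := i.isLt
    rcases Nat.lt_or_ge (i.val + 1) k with h | h
    · exact Or.inl ⟨(hcyc i).trans (Nat.mod_eq_of_lt h), h⟩
    · have he : i.val + 1 = k := by omega
      exact Or.inr ⟨(hcyc i).trans (by rw [he, Nat.mod_self]), he⟩
  have hne_cyc : ∀ i : Fin k, i ≠ cycShift i 1 := by
    intro i h
    have h1 := congrArg Fin.val h
    have h2 := hsucc i
    have := i.isLt
    omega
  -- the key K4 lemma: for every attached triangle, a common endpoint
  have key : ∀ (i : Fin k) (a : Fin (t i)), ∃ p : ℝ × ℝ,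
      p ∈ (f (Sum.inl i)).ends ∧
      (∀ x : Fin 3, p ∈ (f (Sum.inr ⟨i, (a, x)⟩)).ends) ∧
      (∀ u : (Fin k ⊕ Σ j : Fin k, Fin (t j) × Fin 3), u ≠ Sum.inl i →
        (∀ x : Fin 3, u ≠ Sum.inr ⟨i, (a, x)⟩) → p ∉ (f u).pts) := by
    intro i a
    set w : Fin 3 → (Fin k ⊕ Σ j : Fin k, Fin (t j) × Fin 3) :=
      fun x => Sum.inr ⟨i, (a, x)⟩ with hwdef
    have hwne : ∀ x y : Fin 3, x ≠ y → w x ≠ w y := by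
      intro x y hxy h
      apply hxy
      simpa [hwdef] using h
    have hvw : ∀ x : Fin 3, (Sum.inl i : Fin k ⊕ Σ j : Fin k, Fin (t j) × Fin 3) ≠ w x := by
      intro x
      simp [hwdef]
    have hadj0 : ∀ x : Fin 3, (cycleWithTriangles k t).Adj (Sum.inl i) (w x) := by
      intro x
      exact rfl
    have hadjw : ∀ x y : Fin 3, x ≠ y → (cycleWithTriangles k t).Adj (w x) (w y) := by
      intro x y hxy
      exact ⟨rfl, rfl, hxy⟩
    obtain ⟨p, h0, h1, h2, h3⟩ := GridSeg.k4 (f (Sum.inl i)) (f (w 0)) (f (w 1)) (f (w 2))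
      (hdisj _ _ (hvw 0)) (hdisj _ _ (hvw 1)) (hdisj _ _ (hvw 2))
      (hdisj _ _ (hwne 0 1 (by decide))) (hdisj _ _ (hwne 0 2 (by decide)))
      (hdisj _ _ (hwne 1 2 (by decide)))
      ((hadj _ _ (hvw 0)).mp (hadj0 0)) ((hadj _ _ (hvw 1)).mp (hadj0 1))
      ((hadj _ _ (hvw 2)).mp (hadj0 2))
      ((hadj _ _ (hwne 0 1 (by decide))).mp (hadjw 0 1 (by decide)))
      ((hadj _ _ (hwne 0 2 (by decide))).mp (hadjw 0 2 (by decide)))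
      ((hadj _ _ (hwne 1 2 (by decide))).mp (hadjw 1 2 (by decide)))
    refine ⟨p, h0, ?_, ?_⟩
    · intro x
      fin_cases x
      · exact h1
      · exact h2
      · exact h3
    · intro u hu1 hu2 hP
      have hne : w 0 ≠ u := fun h => hu2 0 h.symm
      have htouch : (f (w 0)).Touch (f u) :=
        ⟨p, GridSeg.ends_subset_pts _ h1, hP, Or.inl h1⟩
      have hA := (hadj _ _ hne).mpr htouch
      rcases u with j | y
      · exact hu1 (congrArg Sum.inl (show j = i from hA))
      · have hA' : (⟨i, (a, (0 : Fin 3))⟩ : Σ j : Fin k, Fin (t j) × Fin 3).1 = y.1 ∧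
            (⟨i, (a, (0 : Fin 3))⟩ : Σ j : Fin k, Fin (t j) × Fin 3).2.1.1 = y.2.1.1 ∧
            (⟨i, (a, (0 : Fin 3))⟩ : Σ j : Fin k, Fin (t j) × Fin 3).2.2 ≠ y.2.2 := hA
        obtain ⟨j, a', z⟩ := y
        obtain ⟨hj, ha', -⟩ := hA'
        have hj' : i = j := hj
        subst hj'
        have ha'' : a = a' := Fin.ext ha'
        subst ha''
        exact hu2 z rfl
  choose P hP1 hP2 hP3 using key
  -- positivity of t
  have tpos : ∀ j : Fin k, 0 < t j := by
    intro j
    rw [ht]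
    dsimp only
    split <;> omega
  -- the two triangles at vertex 0
  set o : Fin k := ⟨0, hk0⟩ with ho
  have hto : t o = 2 := by simp [ht, ho]
  obtain ⟨a0, a1, ha01⟩ : ∃ a0 a1 : Fin (t o), a0 ≠ a1 := by
    refine ⟨⟨0, by rw [hto]; omega⟩, ⟨1, by rw [hto]; omega⟩, ?_⟩
    intro h
    simpa using congrArg Fin.val h
  have hp00' : P o a0 ≠ P o a1 := by
    intro h
    have hm := hP3 o a1 (Sum.inr ⟨o, (a0, 0)⟩) (by simp)
      (by
        intro x hxe
        apply ha01
        have hc : a0 = a1 ∧ (0 : Fin 3) = x := by simpa using hxe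
        exact hc.1)
    exact hm (h ▸ GridSeg.ends_subset_pts _ (hP2 o a0 0))
  have hends0 : ∀ q : ℝ × ℝ, q ∈ (f (Sum.inl o)).ends → q = P o a0 ∨ q = P o a1 := by
    obtain ⟨x, y, hxy⟩ := GridSeg.ends_pair (f (Sum.inl o))
    intro q hq
    have hpa := hP1 o a0
    have hpb := hP1 o a1
    rw [hxy] at hq hpa hpb
    simp only [Set.mem_insert_iff, Set.mem_singleton_iff] at hq hpa hpb
    exact mem_pair_elim hq hpa hpb hp00'
  -- contact points along the cycle
  have hedge : ∀ i : Fin k, ∃ q : ℝ × ℝ, q ∈ (f (Sum.inl i)).pts ∧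
      q ∈ (f (Sum.inl (cycShift i 1))).pts ∧
      (q ∈ (f (Sum.inl i)).ends ∨ q ∈ (f (Sum.inl (cycShift i 1))).ends) := by
    intro i
    have hne : (Sum.inl i : Fin k ⊕ Σ j : Fin k, Fin (t j) × Fin 3) ≠
        Sum.inl (cycShift i 1) := by
      simpa using hne_cyc i
    have hA : (cycleWithTriangles k t).Adj (Sum.inl i) (Sum.inl (cycShift i 1)) :=
      ⟨hne_cyc i, Or.inr rfl⟩
    exact (hadj _ _ hne).mp hA
  choose q hq1 hq2 hq3 using hedge
  -- contact points are never triangle points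
  have hqP : ∀ (i m : Fin k) (a : Fin (t m)), q i ≠ P m a := by
    intro i m a h
    by_cases him : i = m
    · subst him
      have hnot := hP3 i a (Sum.inl (cycShift i 1))
        (by simpa using (hne_cyc i).symm) (by intro x; simp)
      exact hnot (h ▸ hq2 i)
    · have hnot := hP3 m a (Sum.inl i) (by simpa using him) (by intro x; simp)
      exact hnot (h ▸ hq1 i)
  -- define the assignment g
  have hgex : ∀ i : Fin k, ∃ j : Fin k, q i ∈ (f (Sum.inl j)).ends := by
    intro i
    rcases hq3 i with h | h
    · exact ⟨i, h⟩
    · exact ⟨_, h⟩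
  choose g hg1 using hgex
  -- adjacency-or-equality from sharing a point
  have relOf : ∀ (m n : Fin k) (Q : ℝ × ℝ), Q ∈ (f (Sum.inl m)).pts →
      Q ∈ (f (Sum.inl n)).pts →
      m = n ∨ m = cycShift n 1 ∨ n = cycShift m 1 := by
    intro m n Q hm hn
    by_cases hmn : m = n
    · exact Or.inl hmn
    · have hne : (Sum.inl m : Fin k ⊕ Σ j : Fin k, Fin (t j) × Fin 3) ≠ Sum.inl n := by
        simpa using hmn
      have htc : (f (Sum.inl m)).Touch (f (Sum.inl n)) := by
        rcases GridSeg.pts_cases hm with h | h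
        · rcases GridSeg.pts_cases hn with h' | h'
          · exact absurd h' (Set.disjoint_left.mp (hdisj _ _ hne) h)
          · exact ⟨Q, hm, hn, Or.inr h'⟩
        · exact ⟨Q, hm, hn, Or.inl h⟩
      have hA := (hadj _ _ hne).mpr htc
      have hA' : m ≠ n ∧ (m = cycShift n 1 ∨ n = cycShift m 1) := hA
      exact Or.inr hA'.2
  -- g never takes value o
  have hg0 : ∀ i : Fin k, g i ≠ o := by
    intro i h
    have hmem := hg1 i
    rw [h] at hmem
    rcases hends0 _ hmem with h' | h'
    · exact hqP i o a0 h'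
    · exact hqP i o a1 h'
  -- g is injective
  have hginj : Function.Injective g := by
    intro i i' hgg
    by_contra hne
    obtain ⟨x, y, hxy⟩ := GridSeg.ends_pair (f (Sum.inl (g i)))
    have e1 := hg1 i
    have e2 := hg1 i'
    rw [← hgg] at e2
    have epj := hP1 (g i) ⟨0, tpos _⟩
    rw [hxy] at e1 e2 epj
    simp only [Set.mem_insert_iff, Set.mem_singleton_iff] at e1 e2 epj
    have hq_eq : q i = q i' :=
      pair_elim2 e1 e2 epj (hqP i (g i) _) (hqP i' (g i) _)
    have r1 := relOf i i' (q i) (hq1 i) (by rw [hq_eq]; exact hq1 i')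
    have r2 := relOf i (cycShift i' 1) (q i) (hq1 i) (by rw [hq_eq]; exact hq2 i')
    have r3 := relOf (cycShift i 1) i' (q i) (hq2 i) (by rw [hq_eq]; exact hq1 i')
    have r4 := relOf (cycShift i 1) (cycShift i' 1) (q i) (hq2 i) (by rw [hq_eq]; exact hq2 i')
    have hv : ∀ {m n : Fin k}, m = n → m.val = n.val := fun h => congrArg Fin.val h
    have e1' := r1.imp hv (Or.imp hv hv)
    have e2' := r2.imp hv (Or.imp hv hv)
    have e3' := r3.imp hv (Or.imp hv hv)
    have e4' := r4.imp hv (Or.imp hv hv)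
    exact index_contra hk i.isLt i'.isLt (fun h => hne (Fin.ext h))
      (hsucc i) (hsucc i') (hsucc (cycShift i 1)) (hsucc (cycShift i' 1)) e1' e2' e3' e4'
  have hsurj := Finite.injective_iff_surjective.mp hginj
  obtain ⟨i, hi⟩ := hsurj o
  exact hg0 i hi
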